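/- Let X_n have continuous density p_n with interval support contained in ℝ and score ρ_n = p_n'/p_n, and let Z be standard Gaussian with cdf Φ and pdf φ. Assume p_n/φ → 0 at both endpoints of the support of p_n (so that the boundary term κ₁* vanishes). Then for every z ∈ ℝ, P(X_n ≤ z) − Φ(z) = −E[ (X_n + ρ_n(X_n)) · Φ(X_n ∧ z)(1 − Φ(X_n ∨ z))/φ(X_n) ]. -/

import Mathlib

open Real MeasureTheory Set Filter

/-- Standard Gaussian pdf. -/
noncomputable def gaussPdf (x : ℝ) : ℝ := (Real.sqrt (2 * π))⁻¹ * Real.exp (-x ^ 2 / 2)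

/-- Standard Gaussian cdf. -/
noncomputable def gaussCdf (x : ℝ) : ℝ := ∫ u in Set.Iic x, gaussPdf u

lemma gaussPdf_eq : gaussPdf = ProbabilityTheory.gaussianPDFReal 0 1 := by
  funext x
  simp [gaussPdf, ProbabilityTheory.gaussianPDFReal]

lemma gaussPdf_pos (x : ℝ) : 0 < gaussPdf x :=
  mul_pos (inv_pos.2 (Real.sqrt_pos.2 (by positivity))) (Real.exp_pos _)

lemma integrable_gaussPdf : Integrable gaussPdf := by
  rw [gaussPdf_eq]; exact ProbabilityTheory.integrable_gaussianPDFReal 0 1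

lemma integral_gaussPdf : ∫ x, gaussPdf x = 1 := by
  rw [gaussPdf_eq]; exact ProbabilityTheory.integral_gaussianPDFReal_eq_one 0 one_ne_zero

lemma continuous_gaussPdf : Continuous gaussPdf := by
  unfold gaussPdf; fun_prop

lemma hasDerivAt_gaussPdf (x : ℝ) : HasDerivAt gaussPdf (-x * gaussPdf x) x := by
  have h1 : HasDerivAt (fun y : ℝ => -y ^ 2 / 2) (-x) x := by
    have := ((hasDerivAt_pow 2 x).neg.div_const 2)
    refine this.congr_deriv ?_
    ring
  have h2 := (h1.exp).const_mul ((Real.sqrt (2 * π))⁻¹)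
  refine h2.congr_deriv ?_
  unfold gaussPdf; ring

lemma hasDerivAt_gaussCdf (x : ℝ) : HasDerivAt gaussCdf (gaussPdf x) x := by
  have hfun : gaussCdf = fun y => gaussCdf 0 + ∫ t in (0:ℝ)..y, gaussPdf t := by
    funext y
    have := intervalIntegral.integral_Iic_sub_Iic
      (f := gaussPdf) (μ := volume) (a := (0:ℝ)) (b := y)
      integrable_gaussPdf.integrableOn integrable_gaussPdf.integrableOn
    simp only [gaussCdf]
    linarith [this]
  rw [hfun]
  exact (intervalIntegral.integral_hasDerivAt_right
    (integrable_gaussPdf.intervalIntegrable)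
    (continuous_gaussPdf.stronglyMeasurableAtFilter _ _)
    continuous_gaussPdf.continuousAt).const_add _

lemma gaussCdf_nonneg (x : ℝ) : 0 ≤ gaussCdf x :=
  setIntegral_nonneg measurableSet_Iic (fun y _ => (gaussPdf_pos y).le)

lemma gaussCdf_le_one (x : ℝ) : gaussCdf x ≤ 1 := by
  rw [← integral_gaussPdf]
  exact setIntegral_le_integral integrable_gaussPdf
    (Eventually.of_forall fun y => (gaussPdf_pos y).le)

lemma abs_mul_le_one {a b : ℝ} (ha0 : 0 ≤ a) (ha1 : a ≤ 1) (hb0 : 0 ≤ b) (hb1 : b ≤ 1) :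
    |a * b| ≤ 1 := by
  rw [abs_of_nonneg (mul_nonneg ha0 hb0)]
  nlinarith

/-- Exact representation of the difference of cdfs against a standard Gaussian:
if `X_n` has density `p` with score `ρ = p'/p` and the boundary terms vanish
(`p/φ → 0` at both endpoints of the support), then for all `z`,
`P(X_n ≤ z) - Φ(z) = -E[(X_n + ρ(X_n)) Φ(X_n∧z)(1-Φ(X_n∨z))/φ(X_n)]`. -/
theorem stmt15 (p : ℝ → ℝ) (hmeas : Measurable p) (hpos : ∀ x, 0 < p x)
    (hmass : ∫ x, p x = 1)
    (hdiff : ∀ x, DifferentiableAt ℝ p x)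
    (hbot : Tendsto (fun x => p x / gaussPdf x) atBot (nhds 0))
    (htop : Tendsto (fun x => p x / gaussPdf x) atTop (nhds 0))
    (hInt : ∀ z : ℝ, Integrable (fun x =>
      (x + deriv p x / p x) *
        (gaussCdf (min x z) * (1 - gaussCdf (max x z)) / gaussPdf x) * p x)) :
    ∀ z : ℝ,
      (∫ x in Set.Iic z, p x) - gaussCdf z =
        -∫ x, (x + deriv p x / p x) *
          (gaussCdf (min x z) * (1 - gaussCdf (max x z)) / gaussPdf x) * p x := by
  intro z
  set v : ℝ → ℝ := fun x => p x / gaussPdf x with hv_def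
  set v' : ℝ → ℝ := fun x => (deriv p x + x * p x) / gaussPdf x with hv'_def
  have hv : ∀ x, HasDerivAt v (v' x) x := by
    intro x
    have h := ((hdiff x).hasDerivAt).div (hasDerivAt_gaussPdf x) (gaussPdf_pos x).ne'
    refine h.congr_deriv (Eq.symm ?_)
    rw [div_eq_div_iff (gaussPdf_pos x).ne' (pow_ne_zero 2 (gaussPdf_pos x).ne')]
    ring
  -- rewrite the integrand
  have hrw : (fun x => (x + deriv p x / p x) *
        (gaussCdf (min x z) * (1 - gaussCdf (max x z)) / gaussPdf x) * p x)
      = fun x => (gaussCdf (min x z) * (1 - gaussCdf (max x z))) * v' x := by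
    funext x
    have hp := (hpos x).ne'
    have hφ := (gaussPdf_pos x).ne'
    simp only [hv'_def]
    field_simp
    ring
  have hIntegrable : Integrable
      (fun x => (gaussCdf (min x z) * (1 - gaussCdf (max x z))) * v' x) := by
    rw [← hrw]; exact hInt z
  have hpInt : Integrable p := by
    by_contra h
    rw [integral_undef h] at hmass
    norm_num at hmass
  -- left piece
  set u : ℝ → ℝ := fun x => gaussCdf x * (1 - gaussCdf z) with hu_def
  set u' : ℝ → ℝ := fun x => gaussPdf x * (1 - gaussCdf z) with hu'_def
  have hu : ∀ x, HasDerivAt u (u' x) x := fun x => (hasDerivAt_gaussCdf x).mul_const _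
  have huv'_eq : EqOn (fun x => (gaussCdf (min x z) * (1 - gaussCdf (max x z))) * v' x)
      (u * v') (Iic z) := by
    intro x hx
    simp only [Pi.mul_apply, hu_def, min_eq_left (mem_Iic.mp hx), max_eq_right (mem_Iic.mp hx)]
  have huv' : IntegrableOn (u * v') (Iic z) :=
    (hIntegrable.integrableOn).congr_fun huv'_eq measurableSet_Iic
  have hu'v_eq : (fun x => u' x * v x) = fun x => (1 - gaussCdf z) * p x := by
    funext x
    have hφ := (gaussPdf_pos x).ne'
    simp only [hu'_def, hv_def]
    field_simp
  have hu'v : IntegrableOn (u' * v) (Iic z) := by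
    have : (u' * v) = fun x => (1 - gaussCdf z) * p x := by
      funext x; exact congrFun hu'v_eq x
    rw [this]
    exact (hpInt.const_mul _).integrableOn
  have h_zero_l : Tendsto (u * v) (nhdsWithin z (Iio z)) (nhds (u z * v z)) := by
    have hcu : ContinuousAt u z :=
      ((hasDerivAt_gaussCdf z).differentiableAt.continuousAt).mul continuousAt_const
    have hcv : ContinuousAt v z := (hv z).differentiableAt.continuousAt
    exact (hcu.mul hcv).continuousWithinAt
  have hbound_u : ∀ x, |u x| ≤ 1 := fun x =>
    abs_mul_le_one (gaussCdf_nonneg x) (gaussCdf_le_one x)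
      (by linarith [gaussCdf_le_one z]) (by linarith [gaussCdf_nonneg z])
  have h_bot_l : Tendsto (u * v) atBot (nhds 0) := by
    refine squeeze_zero_norm (a := fun x => |v x|) (fun x => ?_) (by simpa using hbot.abs)
    simp only [Pi.mul_apply, norm_mul, Real.norm_eq_abs]
    calc |u x| * |v x| ≤ 1 * |v x| :=
          mul_le_mul_of_nonneg_right (hbound_u x) (abs_nonneg _)
      _ = |v x| := one_mul _
  have hleft := integral_Iic_mul_deriv_eq_deriv_mul
    (fun x _ => hu x) (fun x _ => hv x) huv' hu'v h_zero_l h_bot_l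
  -- right piece
  set U : ℝ → ℝ := fun x => gaussCdf z * (1 - gaussCdf x) with hU_def
  set U' : ℝ → ℝ := fun x => gaussCdf z * (-gaussPdf x) with hU'_def
  have hU : ∀ x, HasDerivAt U (U' x) x := fun x =>
    (((hasDerivAt_gaussCdf x).const_sub 1)).const_mul _
  have hUv'_eq : EqOn (fun x => (gaussCdf (min x z) * (1 - gaussCdf (max x z))) * v' x)
      (U * v') (Ioi z) := by
    intro x hx
    have hx' : z ≤ x := le_of_lt (mem_Ioi.mp hx)
    simp only [Pi.mul_apply, hU_def, min_eq_right hx', max_eq_left hx']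
  have hUv' : IntegrableOn (U * v') (Ioi z) :=
    (hIntegrable.integrableOn).congr_fun hUv'_eq measurableSet_Ioi
  have hU'v_eq : (fun x => U' x * v x) = fun x => -(gaussCdf z * p x) := by
    funext x
    have hφ := (gaussPdf_pos x).ne'
    simp only [hU'_def, hv_def]
    field_simp
  have hU'v : IntegrableOn (U' * v) (Ioi z) := by
    have : (U' * v) = fun x => -(gaussCdf z * p x) := by
      funext x; exact congrFun hU'v_eq x
    rw [this]
    exact ((hpInt.const_mul _).neg).integrableOn
  have h_zero_r : Tendsto (U * v) (nhdsWithin z (Ioi z)) (nhds (U z * v z)) := by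
    have hcU : ContinuousAt U z :=
      continuousAt_const.mul
        (continuousAt_const.sub (hasDerivAt_gaussCdf z).differentiableAt.continuousAt)
    have hcv : ContinuousAt v z := (hv z).differentiableAt.continuousAt
    exact (hcU.mul hcv).continuousWithinAt
  have hbound_U : ∀ x, |U x| ≤ 1 := fun x =>
    abs_mul_le_one (gaussCdf_nonneg z) (gaussCdf_le_one z)
      (by linarith [gaussCdf_le_one x]) (by linarith [gaussCdf_nonneg x])
  have h_top_r : Tendsto (U * v) atTop (nhds 0) := by
    refine squeeze_zero_norm (a := fun x => |v x|) (fun x => ?_) (by simpa using htop.abs)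
    simp only [Pi.mul_apply, norm_mul, Real.norm_eq_abs]
    calc |U x| * |v x| ≤ 1 * |v x| :=
          mul_le_mul_of_nonneg_right (hbound_U x) (abs_nonneg _)
      _ = |v x| := one_mul _
  have hright := integral_Ioi_mul_deriv_eq_deriv_mul
    (fun x _ => hU x) (fun x _ => hv x) hUv' hU'v h_zero_r h_top_r
  -- compute the pieces
  have hsplit_p : (∫ x in Iic z, p x) + (∫ x in Ioi z, p x) = 1 := by
    rw [intervalIntegral.integral_Iic_add_Ioi hpInt.integrableOn hpInt.integrableOn]; exact hmass
  have hIic_u'v : ∫ x in Iic z, u' x * v x = (1 - gaussCdf z) * ∫ x in Iic z, p x := by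
    rw [hu'v_eq, integral_const_mul]
  have hIoi_U'v : ∫ x in Ioi z, U' x * v x = -(gaussCdf z * ∫ x in Ioi z, p x) := by
    rw [hU'v_eq]
    rw [integral_neg, integral_const_mul]
  -- assemble the whole-line integral
  have hsplit : (∫ x, (gaussCdf (min x z) * (1 - gaussCdf (max x z))) * v' x)
      = (∫ x in Iic z, u x * v' x) + ∫ x in Ioi z, U x * v' x := by
    rw [← intervalIntegral.integral_Iic_add_Ioi (b := z) (hIntegrable.integrableOn) (hIntegrable.integrableOn)]
    congr 1
    · exact setIntegral_congr_fun measurableSet_Iic huv'_eq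
    · exact setIntegral_congr_fun measurableSet_Ioi hUv'_eq
  have hUz : U z = u z := by simp only [hU_def, hu_def, mul_comm]
  rw [hrw, hsplit, hleft, hright, hIic_u'v, hIoi_U'v, hUz]
  have h1 := gaussCdf_nonneg z
  set F := ∫ x in Iic z, p x
  set G := ∫ x in Ioi z, p x
  have : G = 1 - F := by linarith
  rw [this]
  ring
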